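/- Let Y be a real-valued random variable on a probability space with CDF F(s) = P(Y ≤ s), and define the quantile function Q(u) = inf{ y ∈ ℝ : F(y) ≥ u } for u ∈ (0,1). Fix τ ∈ (0,1) and q ∈ ℝ with F(q) = τ, and assume (q − Y)₊ is integrable. Then u ↦ Q(u) is Lebesgue integrable on (0, τ] and ∫_{0}^{τ} Q(u) du = τ q − E[(q − Y)₊]; equivalently, the lower-tail conditional value at risk C(τ) = τ^{-1} ∫_0^τ Q(u) du satisfies the shortfall representation C(τ) = q − τ^{-1} E[(q − Y)₊]. -/

import Mathlib

open MeasureTheory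

open Set Filter ProbabilityTheory Topology in
private lemma aux_bddBelow (μ : Measure ℝ) [IsProbabilityMeasure μ] {u : ℝ} (hu : 0 < u) :
    BddBelow {y : ℝ | u ≤ cdf μ y} := by
  obtain ⟨y₀, hy₀⟩ : ∃ y₀ : ℝ, cdf μ y₀ < u :=
    ((tendsto_cdf_atBot μ).eventually_lt_const hu).exists
  exact ⟨y₀, fun y hy => le_of_not_gt fun hlt =>
    absurd (hy.trans (monotone_cdf μ hlt.le)) (not_le.mpr hy₀)⟩

open Set Filter ProbabilityTheory Topology in
private lemma aux_csInf_le {μ : Measure ℝ} [IsProbabilityMeasure μ] {u t : ℝ} (hu : 0 < u)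
    (h : u ≤ cdf μ t) :
    sInf {y : ℝ | u ≤ cdf μ y} ≤ t := csInf_le (aux_bddBelow μ hu) h

open Set Filter ProbabilityTheory Topology in
private lemma aux_le_of_csInf_le {μ : Measure ℝ} [IsProbabilityMeasure μ] {u t : ℝ} (hu : 0 < u)
    (hne : {y : ℝ | u ≤ cdf μ y}.Nonempty) (h : sInf {y : ℝ | u ≤ cdf μ y} ≤ t) :
    u ≤ cdf μ t := by
  have key : ∀ y ∈ Ioi t, u ≤ cdf μ y := by
    intro y hy
    obtain ⟨z, hz, hzy⟩ := exists_lt_of_csInf_lt hne (lt_of_le_of_lt h hy)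
    exact hz.trans (monotone_cdf μ hzy.le)
  have htd : Tendsto (cdf μ) (𝓝[>] t) (𝓝 (cdf μ t)) :=
    Tendsto.mono_left ((cdf μ).right_continuous t) (nhdsWithin_mono t Ioi_subset_Ici_self)
  exact ge_of_tendsto htd (eventually_nhdsWithin_of_forall key)

open Set Filter ProbabilityTheory Topology in
private lemma aux_csInf_lt {μ : Measure ℝ} [IsProbabilityMeasure μ] {u s : ℝ} (hu0 : 0 < u)
    (hus : u < cdf μ s) (hatom : μ {s} = 0) :
    sInf {y : ℝ | u ≤ cdf μ y} < s := by
  have h1 : (cdf μ).measure {s} = ENNReal.ofReal (cdf μ s - Function.leftLim (cdf μ) s) :=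
    (cdf μ).measure_singleton s
  rw [measure_cdf, hatom] at h1
  have h4 : Function.leftLim (cdf μ) s ≤ cdf μ s := Monotone.leftLim_le (cdf μ).mono le_rfl
  have hll : Function.leftLim (cdf μ) s = cdf μ s := by
    have h2 : cdf μ s - Function.leftLim (cdf μ) s ≤ 0 := by
      rw [← ENNReal.ofReal_eq_zero]
      exact h1.symm
    linarith
  have htd := Monotone.tendsto_leftLim (cdf μ).mono s
  rw [hll] at htd
  obtain ⟨y, hy1, hy2⟩ := ((htd.eventually (eventually_gt_nhds hus)).and self_mem_nhdsWithin).exists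
  exact lt_of_le_of_lt (aux_csInf_le hu0 hy1.le) hy2

/-- **Shortfall representation of lower-tail CVaR.**
Let `Y` have CDF `F s = P(Y ≤ s)` and quantile function `Q u = inf {y : F y ≥ u}`.
Fix `τ ∈ (0,1)` and `q` with `F q = τ`, and suppose `(q − Y)₊` is integrable.  Then `Q` is
Lebesgue integrable on `(0, τ]`, `∫_0^τ Q(u) du = τ q − E[(q − Y)₊]`, and hence the
lower-tail CVaR `C(τ) = τ⁻¹ ∫_0^τ Q(u) du` equals `q − τ⁻¹ E[(q − Y)₊]`. -/
theorem cvar_shortfall_representation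
    {Ω : Type*} [MeasurableSpace Ω] (P : Measure Ω) [IsProbabilityMeasure P]
    (Y : Ω → ℝ) (hY : Measurable Y)
    (τ : ℝ) (hτ : τ ∈ Set.Ioo (0 : ℝ) 1)
    (q : ℝ) (hq : (P {ω | Y ω ≤ q}).toReal = τ)
    (hint : Integrable (fun ω => max (q - Y ω) 0) P) :
    IntegrableOn (fun u : ℝ => sInf {y : ℝ | u ≤ (P {ω | Y ω ≤ y}).toReal})
        (Set.Ioc 0 τ) ∧
    (∫ u in Set.Ioc 0 τ, sInf {y : ℝ | u ≤ (P {ω | Y ω ≤ y}).toReal})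
        = τ * q - ∫ ω, max (q - Y ω) 0 ∂P ∧
    τ⁻¹ * ∫ u in Set.Ioc 0 τ, sInf {y : ℝ | u ≤ (P {ω | Y ω ≤ y}).toReal}
        = q - τ⁻¹ * ∫ ω, max (q - Y ω) 0 ∂P := by
  classical
  open Set Filter ProbabilityTheory Topology in
  obtain ⟨hτ0, hτ1⟩ := hτ
  set μ : Measure ℝ := P.map Y with hμdef
  haveI : IsProbabilityMeasure μ := Measure.isProbabilityMeasure_map hY.aemeasurable
  have hfeq : ∀ s : ℝ, (P {ω | Y ω ≤ s}).toReal = ProbabilityTheory.cdf μ s := by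
    intro s
    rw [ProbabilityTheory.cdf_eq_real, measureReal_def, hμdef, Measure.map_apply hY measurableSet_Iic]
    rfl
  simp only [hfeq]
  set Q : ℝ → ℝ := fun u => sInf {y : ℝ | u ≤ ProbabilityTheory.cdf μ y} with hQdef
  have hfq : ProbabilityTheory.cdf μ q = τ := (hfeq q).symm.trans hq
  have hfmono : Monotone (ProbabilityTheory.cdf μ) := ProbabilityTheory.monotone_cdf μ
  have hne : ∀ u : ℝ, u ≤ τ → ({y : ℝ | u ≤ ProbabilityTheory.cdf μ y}).Nonempty :=
    fun u hu => ⟨q, by simpa [hfq] using hu⟩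
  have hQle : ∀ u ∈ Set.Ioc 0 τ, Q u ≤ q := fun u hu => aux_csInf_le hu.1 (by rw [hfq]; exact hu.2)
  have hQmono : MonotoneOn Q (Set.Ioc 0 τ) := fun u hu v hv huv =>
    csInf_le_csInf (aux_bddBelow μ hu.1) (hne v hv.2) (fun y hy => le_trans huv hy)
  have hQae : AEMeasurable Q (volume.restrict (Set.Ioc 0 τ)) :=
    aemeasurable_restrict_of_monotoneOn measurableSet_Ioc hQmono
  have hgae : AEMeasurable (fun u => q - Q u) (volume.restrict (Set.Ioc 0 τ)) :=
    aemeasurable_const.sub hQae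
  have hgnn : 0 ≤ᵐ[volume.restrict (Set.Ioc 0 τ)] fun u => q - Q u := by
    filter_upwards [ae_restrict_mem measurableSet_Ioc] with u hu
    exact sub_nonneg.mpr (hQle u hu)
  have hmaxnn : (0 : Ω → ℝ) ≤ᵐ[P] fun ω => max (q - Y ω) 0 :=
    Filter.Eventually.of_forall fun ω => le_max_right _ _
  have hmax_meas : Measurable fun ω => max (q - Y ω) 0 :=
    (measurable_const.sub hY).max measurable_const
  -- layer cake on both sides
  have hlay₁ : ∫⁻ u in Set.Ioc 0 τ, ENNReal.ofReal (q - Q u)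
      = ∫⁻ t in Set.Ioi 0, (volume.restrict (Set.Ioc 0 τ)) {u | t < q - Q u} :=
    lintegral_eq_lintegral_meas_lt _ hgnn hgae
  have hlay₂ : ∫⁻ ω, ENNReal.ofReal (max (q - Y ω) 0) ∂P
      = ∫⁻ t in Set.Ioi 0, P {ω | t < max (q - Y ω) 0} :=
    lintegral_eq_lintegral_meas_lt _ hmaxnn hmax_meas.aemeasurable
  -- the set of atoms of μ is countable
  have hctble : Set.Countable {x : ℝ | μ {x} ≠ 0} := by
    have h := MeasureTheory.Measure.countable_meas_pos_of_disjoint_iUnion (μ := μ)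
      (As := fun x : ℝ => {x}) (fun x => measurableSet_singleton x)
      (fun x y hxy => Set.disjoint_singleton.mpr hxy)
    simpa [pos_iff_ne_zero] using h
  have hae_t : ∀ᵐ t ∂(volume.restrict (Set.Ioi (0:ℝ))), μ {q - t} = 0 := by
    refine ae_restrict_of_ae ?_
    rw [ae_iff]
    refine measure_mono_null ?_
      ((hctble.preimage (f := fun t : ℝ => q - t)
        (fun a b hab => by dsimp at hab; linarith)).measure_zero _)
    intro t ht
    exact ht
  -- key pointwise identity of the tail measures
  have hkey : ∀ t : ℝ, 0 < t → μ {q - t} = 0 →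
      (volume.restrict (Set.Ioc 0 τ)) {u | t < q - Q u} = P {ω | t < max (q - Y ω) 0} := by
    intro t ht hatom
    set s := q - t with hs
    have hsq : s < q := by rw [hs]; linarith
    have hfs_le : ProbabilityTheory.cdf μ s ≤ τ := hfq ▸ hfmono hsq.le
    have hset : {u : ℝ | t < q - Q u} = {u : ℝ | Q u < s} := by
      ext u
      simp only [Set.mem_setOf_eq, hs]
      constructor <;> intro h <;> linarith
    have hLHS : (volume.restrict (Set.Ioc 0 τ)) {u | t < q - Q u}
        = ENNReal.ofReal (ProbabilityTheory.cdf μ s) := by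
      rw [hset, Measure.restrict_apply' measurableSet_Ioc]
      apply le_antisymm
      · have hsub : {u : ℝ | Q u < s} ∩ Set.Ioc 0 τ ⊆ Set.Ioc 0 (ProbabilityTheory.cdf μ s) := by
          rintro u ⟨hu1, hu2⟩
          exact ⟨hu2.1, aux_le_of_csInf_le hu2.1 (hne u hu2.2) hu1.le⟩
        calc volume ({u : ℝ | Q u < s} ∩ Set.Ioc 0 τ)
            ≤ volume (Set.Ioc 0 (ProbabilityTheory.cdf μ s)) := measure_mono hsub
          _ = ENNReal.ofReal (ProbabilityTheory.cdf μ s) := by rw [Real.volume_Ioc, sub_zero]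
      · have hsub2 : Set.Ioo 0 (ProbabilityTheory.cdf μ s) ⊆ {u : ℝ | Q u < s} ∩ Set.Ioc 0 τ := by
          rintro u ⟨hu1, hu2⟩
          exact ⟨aux_csInf_lt hu1 hu2 hatom, hu1, hu2.le.trans hfs_le⟩
        calc ENNReal.ofReal (ProbabilityTheory.cdf μ s)
            = volume (Set.Ioo 0 (ProbabilityTheory.cdf μ s)) := by rw [Real.volume_Ioo, sub_zero]
          _ ≤ volume ({u : ℝ | Q u < s} ∩ Set.Ioc 0 τ) := measure_mono hsub2
    have hsetR : {ω | t < max (q - Y ω) 0} = Y ⁻¹' (Set.Iio s) := by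
      ext ω
      simp only [Set.mem_setOf_eq, Set.mem_preimage, Set.mem_Iio, lt_max_iff, hs]
      constructor
      · rintro (h | h)
        · linarith
        · linarith
      · intro h; left; linarith
    have hRHS : P {ω | t < max (q - Y ω) 0} = ENNReal.ofReal (ProbabilityTheory.cdf μ s) := by
      have h0 : P {ω | t < max (q - Y ω) 0} = μ (Set.Iio s) := by
        rw [hsetR, hμdef, Measure.map_apply hY measurableSet_Iio]
      have h1 : μ (Set.Iic s) = μ (Set.Iio s) + μ {s} := by
        rw [← Set.Iio_union_right,
          measure_union (Set.disjoint_singleton_right.mpr (by simp)) (measurableSet_singleton s)]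
      rw [h0, ProbabilityTheory.ofReal_cdf, h1, hatom, add_zero]
    rw [hLHS, hRHS]
  -- equality of the two Lebesgue integrals
  have hlin_eq : ∫⁻ u in Set.Ioc 0 τ, ENNReal.ofReal (q - Q u)
      = ∫⁻ ω, ENNReal.ofReal (max (q - Y ω) 0) ∂P := by
    rw [hlay₁, hlay₂]
    apply lintegral_congr_ae
    filter_upwards [hae_t, ae_restrict_mem measurableSet_Ioi] with t hatom ht
    exact hkey t ht hatom
  have hfin : (∫⁻ ω, ENNReal.ofReal (max (q - Y ω) 0) ∂P) < ⊤ := by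
    have h := hint.hasFiniteIntegral
    rwa [hasFiniteIntegral_iff_ofReal hmaxnn] at h
  have hg_int : Integrable (fun u => q - Q u) (volume.restrict (Set.Ioc 0 τ)) := by
    refine ⟨hgae.aestronglyMeasurable, ?_⟩
    rw [hasFiniteIntegral_iff_ofReal hgnn, hlin_eq]
    exact hfin
  haveI : IsFiniteMeasure (volume.restrict (Set.Ioc (0:ℝ) τ)) := by
    constructor
    rw [Measure.restrict_apply_univ, Real.volume_Ioc]
    exact ENNReal.ofReal_lt_top
  have hQ_int : IntegrableOn Q (Set.Ioc 0 τ) := by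
    have hQeq : Q = fun u => q - (q - Q u) := by funext u; ring
    rw [IntegrableOn, hQeq]
    exact (integrable_const q).sub hg_int
  have hInt_g : ∫ u in Set.Ioc 0 τ, (q - Q u) = ∫ ω, max (q - Y ω) 0 ∂P := by
    rw [integral_eq_lintegral_of_nonneg_ae hgnn hgae.aestronglyMeasurable,
      integral_eq_lintegral_of_nonneg_ae hmaxnn hmax_meas.aestronglyMeasurable, hlin_eq]
  have hmeasτ : ((volume.restrict (Set.Ioc (0:ℝ) τ)) Set.univ).toReal = τ := by
    rw [Measure.restrict_apply_univ, Real.volume_Ioc, sub_zero, ENNReal.toReal_ofReal hτ0.le]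
  have hmain : ∫ u in Set.Ioc 0 τ, Q u = τ * q - ∫ ω, max (q - Y ω) 0 ∂P := by
    have h1 : ∫ u in Set.Ioc 0 τ, (q - Q u)
        = (∫ _u in Set.Ioc 0 τ, (q:ℝ)) - ∫ u in Set.Ioc 0 τ, Q u :=
      integral_sub (integrable_const q) hQ_int
    rw [integral_const, measureReal_def, hmeasτ, smul_eq_mul, hInt_g] at h1
    linarith
  refine ⟨hQ_int, hmain, ?_⟩
  rw [hmain]
  have hτne : τ ≠ 0 := ne_of_gt hτ0
  field_simp
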